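/- Let E be a real inner product space, X ⊆ E a nonempty convex set, d : E → ℝ a convex Fréchet-differentiable function with Bregman divergence V(y,x) := d(y) − d(x) − ⟨∇d(x), y − x⟩, μ > 0, δ ≥ 0, and g : E → E a μ-relatively strongly monotone operator on X with z* ∈ X a solution of the Minty variational inequality. Let (z_k)_{k≥0}, (w_k)_{k≥0} in X and positive reals (L_k)_{k≥1} satisfy, for every k ≥ 0: (i) w_k minimizes y ↦ ⟨(1/L_{k+1})·g(z_k), y⟩ + V(y, z_k) over X; (ii) z_{k+1} minimizes u ↦ ⟨(1/L_{k+1})·g(w_k), u⟩ + V(u, z_k) + (μ/L_{k+1})·V(u, w_k) over X; (iii) ⟨g(z_k) − g(w_k), z_{k+1} − w_k⟩ ≤ L_{k+1}·( V(w_k, z_k) + V(z_{k+1}, w_k) ) + δ. Then for every k ≥ 0: V(z*, z_{k+1}) ≤ (∏_{i=1}^{k+1} (1 + μ/L_i)^{−1})·V(z*, z_0) + δ/(L_{k+1} + μ) + Σ_{j=1}^{k} ( δ/(L_j + μ) )·∏_{i=j+1}^{k+1} (1 + μ/L_i)^{−1}. -/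

import Mathlib

open scoped RealInnerProductSpace
open Filter Set InnerProductSpace Topology

section Aux
variable {E : Type*} [NormedAddCommGroup E] [InnerProductSpace ℝ E] [CompleteSpace E]

lemma aux_hasGradientAt_inner (p x : E) : HasGradientAt (fun y => ⟪p, y⟫) p x := by
  rw [hasGradientAt_iff_hasFDerivAt]
  have h : (fun y => ⟪p, y⟫) = fun y => (toDual ℝ E p) y := by
    funext y; simp [toDual_apply_apply]
  rw [h]
  exact (toDual ℝ E p).hasFDerivAt

lemma aux_grad_add {f g : E → ℝ} {f' g' x : E} (hf : HasGradientAt f f' x)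
    (hg : HasGradientAt g g' x) : HasGradientAt (fun y => f y + g y) (f' + g') x := by
  rw [hasGradientAt_iff_hasFDerivAt] at *
  rw [map_add]; exact hf.add hg

lemma aux_grad_smul {f : E → ℝ} {f' x : E} (c : ℝ) (hf : HasGradientAt f f' x) :
    HasGradientAt (fun y => c * f y) (c • f') x := by
  rw [hasGradientAt_iff_hasFDerivAt] at *
  simpa [map_smul] using hf.const_mul c

lemma aux_grad_add_const {f : E → ℝ} {f' x : E} (c : ℝ) (hf : HasGradientAt f f' x) :
    HasGradientAt (fun y => f y + c) f' x := by
  rw [hasGradientAt_iff_hasFDerivAt] at *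
  exact hf.add_const c

lemma aux_grad_neg {f : E → ℝ} {f' x : E} (hf : HasGradientAt f f' x) :
    HasGradientAt (fun y => -f y) (-f') x := by
  rw [hasGradientAt_iff_hasFDerivAt] at *
  rw [map_neg]; exact hf.neg

lemma aux_dir {φ : E → ℝ} {c x : E} (v : E) (C : ℝ) (hφ : HasGradientAt φ c x)
    (h : ∀ t : ℝ, t ∈ Set.Ioo (0:ℝ) 1 → φ (x + t • v) - φ x ≤ t * C) :
    ⟪c, v⟫ ≤ C := by
  have hline : HasDerivAt (fun t : ℝ => x + t • v) v 0 := by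
    simpa using ((hasDerivAt_id (0:ℝ)).smul_const v).const_add x
  have hψ : HasDerivAt (fun t : ℝ => φ (x + t • v)) ⟪c, v⟫ 0 := by
    have hF := hasGradientAt_iff_hasFDerivAt.1 hφ
    have hx0 : x = x + (0:ℝ) • v := by simp
    rw [hx0] at hF
    have h2 := hF.comp_hasDerivAt (0:ℝ) hline
    simpa [Function.comp_def, toDual_apply_apply] using h2
  have hslope := hasDerivAt_iff_tendsto_slope.1 hψ
  have hmono : Tendsto (slope (fun t : ℝ => φ (x + t • v)) 0) (𝓝[>] (0:ℝ)) (𝓝 ⟪c, v⟫) :=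
    hslope.mono_left (nhdsWithin_mono _ (fun t ht => ht.ne'))
  refine le_of_tendsto hmono ?_
  filter_upwards [Ioo_mem_nhdsGT zero_lt_one] with t ht
  have h1 := h t ht
  rw [slope_def_field]
  have e0 : x + (0:ℝ) • v = x := by simp
  rw [e0, sub_zero, div_le_iff₀ ht.1]
  simpa [mul_comm] using h1

lemma aux_dir_ge {φ : E → ℝ} {c x : E} (v : E) (hφ : HasGradientAt φ c x)
    (h : ∀ t : ℝ, t ∈ Set.Ioo (0:ℝ) 1 → φ x ≤ φ (x + t • v)) : 0 ≤ ⟪c, v⟫ := by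
  have h2 : ⟪-c, v⟫ ≤ 0 := by
    refine aux_dir v 0 (aux_grad_neg hφ) ?_
    intro t ht
    have := h t ht
    simp only [mul_zero]
    linarith
  rw [inner_neg_left] at h2
  linarith

lemma aux_convex_grad {d : E → ℝ} (hdconv : ConvexOn ℝ Set.univ d) {Dd : E → E}
    (hd : ∀ x, HasGradientAt d (Dd x) x) (x y : E) : ⟪Dd x, y - x⟫ ≤ d y - d x := by
  refine aux_dir (y - x) (d y - d x) (hd x) ?_
  intro t ht
  have hc := hdconv.2 (Set.mem_univ x) (Set.mem_univ y)
    (by linarith [ht.2] : (0:ℝ) ≤ 1 - t) (le_of_lt ht.1) (by ring)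
  have hxt : x + t • (y - x) = (1 - t) • x + t • y := by module
  rw [hxt]
  simp only [smul_eq_mul] at hc
  nlinarith

end Aux

open scoped RealInnerProductSpace
open Finset

section MainProof
open Filter Set InnerProductSpace Topology

variable {E : Type*} [NormedAddCommGroup E] [InnerProductSpace ℝ E] [CompleteSpace E]
variable (X : Set E) (hXconv : Convex ℝ X)
    (d : E → ℝ) (hdconv : ConvexOn ℝ Set.univ d)
    (Dd : E → E) (hd : ∀ x, HasGradientAt d (Dd x) x)
    (V : E → E → ℝ) (hV : ∀ y x, V y x = d y - d x - ⟪Dd x, y - x⟫)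
    (μ : ℝ) (hμ : 0 < μ) (g : E → E)
    (hmono : ∀ x ∈ X, ∀ y ∈ X, μ * (V y x + V x y) ≤ ⟪g y - g x, y - x⟫)
    (zs : E) (hzs : zs ∈ X) (hMinty : ∀ x ∈ X, ⟪g x, zs - x⟫ ≤ 0)

include hdconv hd hV in
lemma aux_Vnn : ∀ y x : E, 0 ≤ V y x := by
  intro y x
  rw [hV]
  linarith [aux_convex_grad hdconv hd x y]

include hXconv hdconv hd hV hμ hmono hzs hMinty in
lemma aux_strong_minty : ∀ p ∈ X, μ * V zs p ≤ ⟪g p, p - zs⟫ := by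
  intro p hp
  have hdc : Continuous d :=
    continuous_iff_continuousAt.2 fun x => (hd x).differentiableAt.continuousAt
  have hEv : ∀ᶠ t in 𝓝[>] (0:ℝ),
      μ * V (zs + t • (p - zs)) p ≤ (1 - t) * ⟪g p, p - zs⟫ := by
    filter_upwards [Ioo_mem_nhdsGT zero_lt_one] with t ht
    have hxtX : zs + t • (p - zs) ∈ X := by
      have h1 : (1 - t) • zs + t • p ∈ X :=
        hXconv hzs hp (by linarith [ht.2]) (le_of_lt ht.1) (by ring)
      have h2 : zs + t • (p - zs) = (1 - t) • zs + t • p := by module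
      rw [h2]; exact h1
    have hm1 := hMinty _ hxtX
    have hz : zs - (zs + t • (p - zs)) = (-t) • (p - zs) := by module
    rw [hz, real_inner_smul_right] at hm1
    have hgx : 0 ≤ ⟪g (zs + t • (p - zs)), p - zs⟫ := by nlinarith [ht.1]
    have hm2 := hmono _ hxtX p hp
    have hw : p - (zs + t • (p - zs)) = (1 - t) • (p - zs) := by module
    rw [hw, real_inner_smul_right, inner_sub_left] at hm2
    have hVp : 0 ≤ V p (zs + t • (p - zs)) := aux_Vnn d hdconv Dd hd V hV _ _
    nlinarith [mul_nonneg (by linarith [ht.2] : (0:ℝ) ≤ 1 - t) hgx,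
      mul_nonneg hμ.le hVp]
  have hline : Continuous fun t : ℝ => zs + t • (p - zs) := by continuity
  have hf : Tendsto (fun t : ℝ => μ * V (zs + t • (p - zs)) p) (𝓝[>] (0:ℝ))
      (𝓝 (μ * V zs p)) := by
    have hc : Continuous fun t : ℝ => μ * V (zs + t • (p - zs)) p := by
      simp only [hV]
      exact continuous_const.mul (((hdc.comp hline).sub continuous_const).sub
        (Continuous.inner continuous_const (hline.sub continuous_const)))
    have h0 := hc.tendsto 0
    simp only [zero_smul, add_zero] at h0
    exact h0.mono_left nhdsWithin_le_nhds
  have hg2 : Tendsto (fun t : ℝ => (1 - t) * ⟪g p, p - zs⟫) (𝓝[>] (0:ℝ))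
      (𝓝 ⟪g p, p - zs⟫) := by
    have hc : Continuous fun t : ℝ => (1 - t) * ⟪g p, p - zs⟫ := by continuity
    have h0 := hc.tendsto 0
    simp only [sub_zero, one_mul] at h0
    exact h0.mono_left nhdsWithin_le_nhds
  exact le_of_tendsto_of_tendsto hf hg2 hEv

end MainProof
/-- Theorem 3: convergence estimate of Algorithm 3 (adaptive first-order method
without restarts, line-search slack δ). -/
theorem algorithm3_convergence
    {E : Type*} [NormedAddCommGroup E] [InnerProductSpace ℝ E] [CompleteSpace E]
    (X : Set E) (hXne : X.Nonempty) (hXconv : Convex ℝ X)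
    (d : E → ℝ) (hdconv : ConvexOn ℝ Set.univ d)
    (Dd : E → E) (hd : ∀ x, HasGradientAt d (Dd x) x)
    (V : E → E → ℝ) (hV : ∀ y x, V y x = d y - d x - ⟪Dd x, y - x⟫)
    (μ : ℝ) (hμ : 0 < μ) (g : E → E)
    (hmono : ∀ x ∈ X, ∀ y ∈ X, μ * (V y x + V x y) ≤ ⟪g y - g x, y - x⟫)
    (zs : E) (hzs : zs ∈ X) (hMinty : ∀ x ∈ X, ⟪g x, zs - x⟫ ≤ 0)
    (z w : ℕ → E) (hzX : ∀ k, z k ∈ X) (hwX : ∀ k, w k ∈ X)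
    (L : ℕ → ℝ) (hL : ∀ i ≥ 1, 0 < L i)
    (hwmin : ∀ k : ℕ, ∀ y ∈ X,
      (1 / L (k + 1)) * ⟪g (z k), w k⟫ + V (w k) (z k) ≤
        (1 / L (k + 1)) * ⟪g (z k), y⟫ + V y (z k))
    (hzmin : ∀ k : ℕ, ∀ u ∈ X,
      (1 / L (k + 1)) * ⟪g (w k), z (k + 1)⟫ + V (z (k + 1)) (z k) +
          (μ / L (k + 1)) * V (z (k + 1)) (w k) ≤
        (1 / L (k + 1)) * ⟪g (w k), u⟫ + V u (z k) + (μ / L (k + 1)) * V u (w k))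
    (δ : ℝ) (hδ : 0 ≤ δ)
    (hls : ∀ k : ℕ, ⟪g (z k) - g (w k), z (k + 1) - w k⟫ ≤
      L (k + 1) * (V (w k) (z k) + V (z (k + 1)) (w k)) + δ) :
    ∀ k : ℕ, V zs (z (k + 1)) ≤
      (∏ i ∈ Icc 1 (k + 1), (1 + μ / L i)⁻¹) * V zs (z 0) + δ / (L (k + 1) + μ) +
        ∑ j ∈ Icc 1 k, δ / (L j + μ) * ∏ i ∈ Icc (j + 1) (k + 1), (1 + μ / L i)⁻¹ := by
  have hVnn := aux_Vnn d hdconv Dd hd V hV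
  have hkey := aux_strong_minty X hXconv d hdconv Dd hd V hV μ hμ g hmono zs hzs hMinty
  have step : ∀ k : ℕ, V zs (z (k + 1)) ≤
      (1 + μ / L (k + 1))⁻¹ * V zs (z k) + δ / (L (k + 1) + μ) := by
    intro k
    have hLk : 0 < L (k + 1) := hL (k + 1) (by omega)
    -- gradient of the objective in step (i)
    have hφ1 : HasGradientAt (fun y => (1 / L (k + 1)) * ⟪g (z k), y⟫ + V y (z k))
        (((1 / L (k + 1)) • g (z k) + (-1 : ℝ) • Dd (z k)) + Dd (w k)) (w k) := by
      have he : (fun y => (1 / L (k + 1)) * ⟪g (z k), y⟫ + V y (z k)) =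
          fun y => ((1 / L (k + 1)) * ⟪g (z k), y⟫ + (-1 : ℝ) * ⟪Dd (z k), y⟫) +
            (d y + (⟪Dd (z k), z k⟫ - d (z k))) := by
        funext y; rw [hV]; rw [inner_sub_right]; ring
      rw [he]
      exact aux_grad_add
        (aux_grad_add (aux_grad_smul _ (aux_hasGradientAt_inner _ _))
          (aux_grad_smul _ (aux_hasGradientAt_inner _ _)))
        (aux_grad_add_const _ (hd (w k)))
    -- gradient of the objective in step (ii)
    have hφ2 : HasGradientAt
        (fun u => (1 / L (k + 1)) * ⟪g (w k), u⟫ + V u (z k) +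
          (μ / L (k + 1)) * V u (w k))
        ((((1 / L (k + 1)) • g (w k) + (-1 : ℝ) • Dd (z k)) +
            (-(μ / L (k + 1))) • Dd (w k)) + (1 + μ / L (k + 1)) • Dd (z (k + 1)))
        (z (k + 1)) := by
      have he : (fun u => (1 / L (k + 1)) * ⟪g (w k), u⟫ + V u (z k) +
          (μ / L (k + 1)) * V u (w k)) =
          fun u => (((1 / L (k + 1)) * ⟪g (w k), u⟫ + (-1 : ℝ) * ⟪Dd (z k), u⟫) +
              (-(μ / L (k + 1))) * ⟪Dd (w k), u⟫) +
            ((1 + μ / L (k + 1)) * d u +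
              (⟪Dd (z k), z k⟫ - d (z k) +
                (μ / L (k + 1)) * (⟪Dd (w k), w k⟫ - d (w k)))) := by
        funext u; rw [hV, hV]; rw [inner_sub_right, inner_sub_right]; ring
      rw [he]
      exact aux_grad_add
        (aux_grad_add
          (aux_grad_add (aux_grad_smul _ (aux_hasGradientAt_inner _ _))
            (aux_grad_smul _ (aux_hasGradientAt_inner _ _)))
          (aux_grad_smul _ (aux_hasGradientAt_inner _ _)))
        (aux_grad_add_const _ (aux_grad_smul _ (hd (z (k + 1)))))
    -- first-order optimality for step (ii) at u = zs
    have h1 := aux_dir_ge (zs - z (k + 1)) hφ2 (by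
      intro t ht
      have hmem : z (k + 1) + t • (zs - z (k + 1)) ∈ X := by
        have hm := hXconv (hzX (k + 1)) hzs (by linarith [ht.2] : (0:ℝ) ≤ 1 - t)
          (le_of_lt ht.1) (by ring)
        have h2 : z (k + 1) + t • (zs - z (k + 1)) = (1 - t) • z (k + 1) + t • zs := by
          module
        rw [h2]; exact hm
      exact hzmin k _ hmem)
    -- first-order optimality for step (i) at y = z (k+1)
    have h2 := aux_dir_ge (z (k + 1) - w k) hφ1 (by
      intro t ht
      have hmem : w k + t • (z (k + 1) - w k) ∈ X := by
        have hm := hXconv (hwX k) (hzX (k + 1)) (by linarith [ht.2] : (0:ℝ) ≤ 1 - t)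
          (le_of_lt ht.1) (by ring)
        have h2 : w k + t • (z (k + 1) - w k) = (1 - t) • w k + t • z (k + 1) := by
          module
        rw [h2]; exact hm
      exact hwmin k _ hmem)
    have h3 : (1 / L (k + 1)) * ⟪g (z k) - g (w k), z (k + 1) - w k⟫ ≤
        (V (w k) (z k) + V (z (k + 1)) (w k)) + δ / L (k + 1) := by
      have hm := mul_le_mul_of_nonneg_left (hls k)
        (le_of_lt (by positivity : (0:ℝ) < 1 / L (k + 1)))
      calc (1 / L (k + 1)) * ⟪g (z k) - g (w k), z (k + 1) - w k⟫
          ≤ (1 / L (k + 1)) * (L (k + 1) * (V (w k) (z k) + V (z (k + 1)) (w k)) + δ) := hm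
        _ = (V (w k) (z k) + V (z (k + 1)) (w k)) + δ / L (k + 1) := by
            field_simp
    have h4 : (μ / L (k + 1)) * V zs (w k) ≤ (1 / L (k + 1)) * ⟪g (w k), w k - zs⟫ := by
      have hm := mul_le_mul_of_nonneg_left (hkey (w k) (hwX k))
        (le_of_lt (by positivity : (0:ℝ) < 1 / L (k + 1)))
      calc (μ / L (k + 1)) * V zs (w k) = (1 / L (k + 1)) * (μ * V zs (w k)) := by ring
        _ ≤ _ := hm
    have h6 : (0:ℝ) ≤ (μ / L (k + 1)) * V (z (k + 1)) (w k) :=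
      mul_nonneg (by positivity) (hVnn _ _)
    have hcomb : (1 + μ / L (k + 1)) * V zs (z (k + 1)) ≤ V zs (z k) + δ / L (k + 1) := by
      simp only [hV, inner_add_left, inner_sub_left, inner_sub_right,
        real_inner_smul_left] at h1 h2 h3 h4 h6 ⊢
      linarith [h1, h2, h3, h4, h6]
    have h1m : (0:ℝ) < 1 + μ / L (k + 1) := by positivity
    calc V zs (z (k + 1)) ≤ (V zs (z k) + δ / L (k + 1)) / (1 + μ / L (k + 1)) := by
          rw [le_div_iff₀ h1m]; linarith [hcomb]
      _ = (1 + μ / L (k + 1))⁻¹ * V zs (z k) + δ / (L (k + 1) + μ) := by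
          have hLμ : (0:ℝ) < L (k + 1) + μ := by positivity
          field_simp
  intro k
  induction k with
  | zero => simpa using step 0
  | succ n ih =>
    have hLn : 0 < L (n + 1 + 1) := hL (n + 1 + 1) (by omega)
    have hc : (0:ℝ) ≤ (1 + μ / L (n + 1 + 1))⁻¹ := by positivity
    calc V zs (z (n + 1 + 1))
        ≤ (1 + μ / L (n + 1 + 1))⁻¹ * V zs (z (n + 1)) + δ / (L (n + 1 + 1) + μ) :=
          step (n + 1)
      _ ≤ (1 + μ / L (n + 1 + 1))⁻¹ *
            ((∏ i ∈ Icc 1 (n + 1), (1 + μ / L i)⁻¹) * V zs (z 0) + δ / (L (n + 1) + μ) +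
              ∑ j ∈ Icc 1 n, δ / (L j + μ) * ∏ i ∈ Icc (j + 1) (n + 1), (1 + μ / L i)⁻¹) +
            δ / (L (n + 1 + 1) + μ) := by
          have := mul_le_mul_of_nonneg_left ih hc
          linarith [this]
      _ = (∏ i ∈ Icc 1 (n + 1 + 1), (1 + μ / L i)⁻¹) * V zs (z 0) +
            δ / (L (n + 1 + 1) + μ) +
            ∑ j ∈ Icc 1 (n + 1), δ / (L j + μ) *
              ∏ i ∈ Icc (j + 1) (n + 1 + 1), (1 + μ / L i)⁻¹ := by
          have e : ∑ j ∈ Icc 1 n, δ / (L j + μ) *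
                ∏ i ∈ Icc (j + 1) (n + 1 + 1), (1 + μ / L i)⁻¹
              = (∑ j ∈ Icc 1 n, δ / (L j + μ) *
                  ∏ i ∈ Icc (j + 1) (n + 1), (1 + μ / L i)⁻¹) *
                (1 + μ / L (n + 1 + 1))⁻¹ := by
            rw [Finset.sum_mul]
            refine Finset.sum_congr rfl fun j hj => ?_
            rw [Finset.prod_Icc_succ_top
              (by have := (Finset.mem_Icc.1 hj).2; omega : j + 1 ≤ n + 1 + 1)]
            ring
          rw [Finset.prod_Icc_succ_top (by omega : 1 ≤ n + 1 + 1),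
            Finset.sum_Icc_succ_top (by omega : 1 ≤ n + 1),
            Finset.Icc_self, Finset.prod_singleton, e]
          ring
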